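/- Let R be an associative ring and let Z₀ be a subring of R with Z₀ ⊆ Z(R) (every element of Z₀ is central in R). Set J = Z₀ + Z₀R, a two-sided ideal of R. Then for every k ≥ 2 the additive subgroup generated by left-normed commutators of k elements of J equals Z₀^k · R^(−)_k, where Z₀^k is the additive span of k-fold products of elements of Z₀; in particular [J,J] = Z₀²·[R,R]. -/

import Mathlib

/-- `I` is a right ideal of `R` (as an additive subgroup closed under right multiplication). -/
def IsRightIdealSG {R : Type*} [Ring R] (I : AddSubgroup R) : Prop :=
  ∀ i ∈ I, ∀ r : R, i * r ∈ I

/-- `I` is a left ideal of `R`. -/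
def IsLeftIdealSG {R : Type*} [Ring R] (I : AddSubgroup R) : Prop :=
  ∀ i ∈ I, ∀ r : R, r * i ∈ I

/-- `I` is a two-sided ideal of `R`. -/
def IsIdealSG {R : Type*} [Ring R] (I : AddSubgroup R) : Prop :=
  IsLeftIdealSG I ∧ IsRightIdealSG I

/-- Left-normed iterated commutator: `itComm s n = [[...[s 0, s 1],...], s n]`
(a left-normed commutator of `n + 1` elements). -/
def itComm {R : Type*} [Ring R] (s : ℕ → R) : ℕ → R
  | 0 => s 0
  | n + 1 => itComm s n * s (n + 1) - s (n + 1) * itComm s n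

/-- `S` is Lie nilpotent of class ≤ m : every left-normed commutator of `m + 1`
elements of `S` vanishes. -/
def LieNilpotentClassLe {R : Type*} [Ring R] (S : Set R) (m : ℕ) : Prop :=
  ∀ s : ℕ → R, (∀ n, s n ∈ S) → itComm s m = 0

/-- The Lie derived series of an additive subgroup `S` of a ring:
`D 0 = S`, `D (k+1)` = additive span of `[D k, D k]`. -/
def derSeries {R : Type*} [Ring R] (S : AddSubgroup R) : ℕ → AddSubgroup R
  | 0 => S
  | n + 1 => AddSubgroup.closure
      {x | ∃ a ∈ derSeries S n, ∃ b ∈ derSeries S n, x = a * b - b * a}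

/-- `R^(−)_n`: the additive subgroup generated by all left-normed commutators of
`n` elements of `R`. -/
def lcs (R : Type*) [Ring R] (n : ℕ) : AddSubgroup R :=
  AddSubgroup.closure {x | ∃ s : ℕ → R, x = itComm s (n - 1)}

/-- `R_n = R^(−)_n + R^(−)_n · R`, a two-sided ideal of `R`. -/
def Rn (R : Type*) [Ring R] (n : ℕ) : AddSubgroup R :=
  lcs R n ⊔ AddSubgroup.closure {x | ∃ c ∈ lcs R n, ∃ r : R, x = c * r}

/-- The additive span of `k`-fold products of elements of `S`. -/
def spanPow {R : Type*} [Ring R] (S : Set R) (k : ℕ) : AddSubgroup R :=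
  AddSubgroup.closure {x | ∃ l : List R, l.length = k ∧ (∀ a ∈ l, a ∈ S) ∧ x = l.prod}

/-- `J` is nilpotent: all `k`-fold products of its elements vanish for some `k > 0`. -/
def IsNilpotentSG {R : Type*} [Ring R] (J : AddSubgroup R) : Prop :=
  ∃ k : ℕ, 0 < k ∧ ∀ l : List R, l.length = k → (∀ a ∈ l, a ∈ J) → l.prod = 0

/-- `R` is semiprime: it has no nonzero nilpotent two-sided ideals. -/
def IsSemiprimeRing (R : Type*) [Ring R] : Prop :=
  ∀ J : AddSubgroup R, IsIdealSG J → IsNilpotentSG J → J = ⊥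
theorem itComm_congr' {R : Type*} [Ring R] (s t : ℕ → R) :
    ∀ m, (∀ n, n ≤ m → s n = t n) → itComm s m = itComm t m := by
  intro m
  induction m with
  | zero => intro h; simpa [itComm] using h 0 le_rfl
  | succ m ih =>
    intro h
    simp only [itComm]
    rw [ih (fun n hn => h n (hn.trans (Nat.le_succ m))), h (m+1) le_rfl]

theorem prod_central' {R : Type*} [Ring R] :
    ∀ (l : List R), (∀ a ∈ l, ∀ x : R, a * x = x * a) → ∀ x : R, l.prod * x = x * l.prod
  | [], _, x => by simp
  | a :: l, h, x => by
    simp only [List.prod_cons]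
    rw [mul_assoc, prod_central' l (fun b hb => h b (List.mem_cons_of_mem a hb)) x,
      ← mul_assoc, h a (List.mem_cons_self), mul_assoc]

theorem central_step' {R : Type*} [Ring R] (C w A b : R)
    (hC : ∀ x, C * x = x * C) (hw : ∀ x, w * x = x * w) :
    C * A * (w * b) - w * b * (C * A) = C * w * (A * b - b * A) := by
  have e1 : C * A * (w * b) = C * w * (A * b) := by
    rw [mul_assoc C A, ← mul_assoc A w, ← hw A, mul_assoc w A, ← mul_assoc C w]
  have e2 : w * b * (C * A) = C * w * (b * A) := by
    rw [mul_assoc w b, ← mul_assoc b C, ← hC b, mul_assoc C b, ← mul_assoc w C, hw C]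
  rw [e1, e2, ← mul_sub]

theorem itComm_factor' {R : Type*} [Ring R] (z s : ℕ → R)
    (hz : ∀ n, ∀ x : R, z n * x = x * z n) :
    ∀ m, itComm (fun n => z n * s n) m
      = (List.ofFn fun t : Fin (m+1) => z t).prod * itComm s m := by
  intro m
  induction m with
  | zero => simp [itComm]
  | succ m ih =>
    have hc : ∀ x : R, (List.ofFn fun t : Fin (m+1) => z t).prod * x
        = x * (List.ofFn fun t : Fin (m+1) => z t).prod := by
      refine prod_central' _ ?_
      intro a ha
      obtain ⟨i, rfl⟩ := List.mem_ofFn.mp ha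
      exact hz i
    have hofn : (List.ofFn fun t : Fin (m+2) => z t).prod
        = (List.ofFn fun t : Fin (m+1) => z (t : ℕ)).prod * z (m+1) := by
      rw [List.ofFn_succ']
      simp [List.concat_eq_append, mul_assoc]
    simp only [itComm]
    rw [ih, hofn]
    exact central_step' _ _ _ _ hc (hz (m+1))

theorem itComm_update_zero' {R : Type*} [Ring R] (s : ℕ → R) :
    ∀ m j, j ≤ m → itComm (Function.update s j 0) m = 0 := by
  intro m
  induction m with
  | zero =>
    intro j hj
    interval_cases j
    simp [itComm]
  | succ m ih =>
    intro j hj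
    rcases Nat.lt_succ_iff_lt_or_eq.mp (Nat.lt_succ_of_le hj) with h | rfl
    · have h' : j ≤ m := by omega
      simp only [itComm]
      rw [Function.update_of_ne (by omega), ih j (by omega)]
      simp
    · simp only [itComm]
      rw [itComm_congr' _ s m (fun n hn => Function.update_of_ne (by omega) _ _),
        Function.update_self]
      noncomm_ring

theorem itComm_update_add' {R : Type*} [Ring R] (s : ℕ → R) :
    ∀ m j, j ≤ m → ∀ a b : R,
      itComm (Function.update s j (a + b)) m
        = itComm (Function.update s j a) m + itComm (Function.update s j b) m := by
  intro m
  induction m with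
  | zero =>
    intro j hj a b
    interval_cases j
    simp [itComm]
  | succ m ih =>
    intro j hj a b
    rcases Nat.lt_succ_iff_lt_or_eq.mp (Nat.lt_succ_of_le hj) with h | rfl
    · simp only [itComm]
      rw [Function.update_of_ne (show (m+1:ℕ) ≠ j by omega),
        Function.update_of_ne (show (m+1:ℕ) ≠ j by omega),
        Function.update_of_ne (show (m+1:ℕ) ≠ j by omega),
        ih j (by omega)]
      noncomm_ring
    · simp only [itComm]
      rw [itComm_congr' _ s m (fun n hn => Function.update_of_ne (by omega) _ _),
        itComm_congr' (Function.update s (m+1) a) s m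
          (fun n hn => Function.update_of_ne (by omega) _ _),
        itComm_congr' (Function.update s (m+1) b) s m
          (fun n hn => Function.update_of_ne (by omega) _ _)]
      simp only [Function.update_self]
      noncomm_ring


/-- For a central subring `Z₀ ⊆ Z(R)` and the two-sided ideal
`J = Z₀ + Z₀R`, the additive span of left-normed commutators of `k ≥ 2` elements of `J`
equals `Z₀^k · R^(−)_k`. -/
theorem comm_of_central_ideal_eq {R : Type*} [Ring R] (Z₀ : AddSubgroup R)
    (hZmul : ∀ a ∈ Z₀, ∀ b ∈ Z₀, a * b ∈ Z₀)
    (hZcent : ∀ z ∈ Z₀, ∀ r : R, z * r = r * z)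
    (J : AddSubgroup R)
    (hJ : J = Z₀ ⊔ AddSubgroup.closure {x | ∃ z ∈ Z₀, ∃ r : R, x = z * r})
    (k : ℕ) (hk : 2 ≤ k) :
    AddSubgroup.closure {x | ∃ s : ℕ → R, (∀ n, s n ∈ J) ∧ x = itComm s (k - 1)} =
      AddSubgroup.closure {x | ∃ l : List R, l.length = k ∧ (∀ a ∈ l, a ∈ Z₀) ∧
        ∃ s : ℕ → R, x = l.prod * itComm s (k - 1)} := by
  have hmk : k - 1 + 1 = k := by omega
  set m := k - 1 with hmdef
  set RHS := AddSubgroup.closure {x : R | ∃ l : List R, l.length = k ∧ (∀ a ∈ l, a ∈ Z₀) ∧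
      ∃ s : ℕ → R, x = l.prod * itComm s m} with hRHS
  have hJc : J = AddSubgroup.closure ((Z₀ : Set R) ∪ {x | ∃ z ∈ Z₀, ∃ r : R, x = z * r}) := by
    rw [AddSubgroup.closure_union, AddSubgroup.closure_eq, hJ]
  -- the key downward induction
  have key : ∀ j : ℕ, ∀ s : ℕ → R,
      (∀ n, n < m + 1 - j → ∃ z ∈ Z₀, ∃ r : R, s n = z * r) →
      (∀ n, m + 1 - j ≤ n → n ≤ m → s n ∈ J) →
      itComm s m ∈ RHS := by
    intro j
    induction j with
    | zero =>
      intro s hpure _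
      simp only [Nat.sub_zero] at hpure
      classical
      let z : ℕ → R := fun n => if h : n < m + 1 then (hpure n h).choose else 0
      let r : ℕ → R := fun n =>
        if h : n < m + 1 then (hpure n h).choose_spec.2.choose else 0
      have hzZ : ∀ n, z n ∈ Z₀ := by
        intro n
        by_cases h : n < m + 1
        · simp only [z, dif_pos h]
          exact (hpure n h).choose_spec.1
        · simp only [z, dif_neg h]
          exact zero_mem _
      have hzc : ∀ n, ∀ x : R, z n * x = x * z n := fun n => hZcent _ (hzZ n)
      have hsr : ∀ n, n ≤ m → s n = z n * r n := by
        intro n hn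
        have h : n < m + 1 := by omega
        simp only [z, r, dif_pos h]
        exact (hpure n h).choose_spec.2.choose_spec
      have h1 : itComm s m = itComm (fun n => z n * r n) m :=
        itComm_congr' _ _ m hsr
      rw [h1, itComm_factor' z r hzc m]
      exact AddSubgroup.subset_closure
        ⟨List.ofFn fun t : Fin (m+1) => z t,
          by simp [hmk],
          by
            intro a ha
            obtain ⟨i, rfl⟩ := List.mem_ofFn.mp ha
            exact hzZ i,
          r, rfl⟩
    | succ j ih =>
      intro s hpure hJmem
      by_cases hij : m + 1 - (j + 1) = m + 1 - j
      · exact ih s (by rw [hij] at hpure; exact hpure) (by rw [hij] at hJmem; exact hJmem)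
      · set i := m + 1 - (j + 1) with hidef
        have hi1 : m + 1 - j = i + 1 := by omega
        have him : i ≤ m := by omega
        have hsi : s i ∈ AddSubgroup.closure
            ((Z₀ : Set R) ∪ {x | ∃ z ∈ Z₀, ∃ r : R, x = z * r}) := by
          rw [← hJc]
          exact hJmem i le_rfl him
        have hp : itComm (Function.update s i (s i)) m ∈ RHS := by
          refine AddSubgroup.closure_induction
            (p := fun a _ => itComm (Function.update s i a) m ∈ RHS)
            ?_ ?_ ?_ ?_ hsi
          · intro a ha
            have hap : ∃ z ∈ Z₀, ∃ r : R, a = z * r := by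
              rcases ha with ha | ha
              · exact ⟨a, ha, 1, (mul_one a).symm⟩
              · exact ha
            refine ih (Function.update s i a) ?_ ?_
            · intro n hn
              rw [hi1] at hn
              rcases Nat.lt_succ_iff_lt_or_eq.mp hn with h | rfl
              · rw [Function.update_of_ne (by omega)]
                exact hpure n h
              · rw [Function.update_self]
                exact hap
            · intro n hn1 hn2
              rw [hi1] at hn1
              rw [Function.update_of_ne (by omega)]
              exact hJmem n (by omega) hn2
          · show itComm (Function.update s i 0) m ∈ RHS
            rw [itComm_update_zero' s m i him]
            exact zero_mem _
          · intro a b _ _ ha hb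
            rw [itComm_update_add' s m i him a b]
            exact add_mem ha hb
          · intro a _ ha
            have h := itComm_update_add' s m i him a (-a)
            rw [add_neg_cancel, itComm_update_zero' s m i him] at h
            rw [← neg_eq_of_add_eq_zero_right h.symm]
            exact neg_mem ha
        rwa [Function.update_eq_self] at hp
  apply le_antisymm
  · rw [AddSubgroup.closure_le]
    rintro x ⟨s, hs, rfl⟩
    exact key (m + 1) s (by intro n hn; omega) (fun n _ _ => hs n)
  · rw [AddSubgroup.closure_le]
    rintro x ⟨l, hl, hlZ, s, rfl⟩
    classical
    set z : ℕ → R := fun n => l.getD n 0 with hz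
    have hzZ : ∀ n, z n ∈ Z₀ := by
      intro n
      by_cases h : n < l.length
      · rw [hz]
        simp only [List.getD_eq_getElem l 0 h]
        exact hlZ _ (List.getElem_mem h)
      · rw [hz]
        simp only [List.getD_eq_default l 0 (show l.length ≤ n by omega)]
        exact zero_mem _
    have hzc : ∀ n, ∀ x : R, z n * x = x * z n := fun n => hZcent _ (hzZ n)
    have hofl : (List.ofFn fun t : Fin (m+1) => z t) = l := by
      apply List.ext_getElem
      · simp [hl, hmk]
      · intro i h1 h2
        simp only [List.getElem_ofFn, hz]
        rw [List.getD_eq_getElem l 0 h2]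
    have hfac := itComm_factor' z s hzc m
    rw [hofl] at hfac
    refine AddSubgroup.subset_closure ⟨fun n => z n * s n, ?_, hfac.symm⟩
    intro n
    rw [hJ]
    exact AddSubgroup.mem_sup_right (AddSubgroup.subset_closure ⟨z n, hzZ n, s n, rfl⟩)
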